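/- If a finite set A of integers tiles ℤ by translations (i.e. ℤ = A ⊕ B for some B ⊆ ℤ), then any such tiling complement B is periodic: there exists a positive integer t such that B + t = B. Moreover a period t can be chosen with t ≤ 2^{diam(A)}. -/

import Mathlib

/-- Newman's theorem: any tiling complement `B` of a finite set `A ⊆ ℤ` is periodic,
with a period `t` satisfying `0 < t ≤ 2^{diam A}`. -/
theorem stmt_6 (A : Finset ℤ) (hA : A.Nonempty) (B : Set ℤ)
    (htile : ∀ n : ℤ, ∃! p : ℤ × ℤ, p.1 ∈ A ∧ p.2 ∈ B ∧ p.1 + p.2 = n) :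
    ∃ t : ℤ, 0 < t ∧ (fun b => b + t) '' B = B ∧
      t ≤ 2 ^ (A.max' hA - A.min' hA).toNat := by
  classical
  set a0 := A.min' hA with ha0
  set a1 := A.max' hA with ha1
  set d : ℕ := (a1 - a0).toNat with hddef
  have hd' : (d : ℤ) = a1 - a0 := Int.toNat_of_nonneg (by
    have := A.min'_le a1 (A.max'_mem hA); omega)
  have ha0mem : a0 ∈ A := A.min'_mem hA
  have ha1mem : a1 ∈ A := A.max'_mem hA
  have hbound : ∀ a ∈ A, a0 ≤ a ∧ a ≤ a1 := fun a ha => ⟨A.min'_le a ha, A.le_max' a ha⟩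
  -- key characterization
  have key : ∀ c ∈ A, ∀ x : ℤ, x ∈ B ↔ ∀ b ∈ B, b ≠ x → (x + c - b) ∉ A := by
    intro c hc x
    obtain ⟨p, ⟨hpA, hpB, hps⟩, huniq⟩ := htile (x + c)
    constructor
    · intro hx b hb hbx ha
      have h1 : (c, x) = p := huniq (c, x) ⟨hc, hx, by ring⟩
      have h2 : (x + c - b, b) = p := huniq (x + c - b, b) ⟨ha, hb, by ring⟩
      rw [← h1] at h2
      exact hbx (congrArg Prod.snd h2)
    · intro h
      by_cases hbx : p.2 = x
      · rwa [hbx] at hpB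
      · exfalso
        have hpa : x + c - p.2 = p.1 := by omega
        exact h p.2 hpB hbx (hpa ▸ hpA)
  by_cases hd0 : d = 0
  · -- A is a singleton up to diameter: B = ℤ
    have hall : ∀ x : ℤ, x ∈ B := by
      intro x
      rw [key a0 ha0mem x]
      intro b hb hbx ha
      obtain ⟨h1, h2⟩ := hbound _ ha
      omega
    refine ⟨1, one_pos, ?_, by exact_mod_cast Nat.one_le_two_pow⟩
    ext y
    simp only [Set.mem_image]
    exact ⟨fun _ => hall y, fun _ => ⟨y - 1, hall _, by ring⟩⟩
  · -- pigeonhole on windows of length d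
    have card_lt : Fintype.card (Fin d → Bool) < Fintype.card (Fin (2 ^ d + 1)) := by
      simp [Fintype.card_fun]
    obtain ⟨i, j, hij, heq⟩ := Fintype.exists_ne_map_eq_of_card_lt
      (fun n : Fin (2 ^ d + 1) => fun k : Fin d => decide (((n : ℕ) : ℤ) + (k : ℕ) ∈ B)) card_lt
    have hne : (i : ℕ) ≠ (j : ℕ) := fun h => hij (Fin.ext h)
    set m : ℕ := min (i : ℕ) (j : ℕ) with hm
    set M : ℕ := max (i : ℕ) (j : ℕ) with hM
    have hmM : m < M := by omega
    have hMle : M ≤ 2 ^ d := by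
      have hi := i.isLt; have hj := j.isLt; omega
    set t : ℤ := (M : ℤ) - (m : ℤ) with ht
    have ht0 : 0 < t := by omega
    have hwin : ∀ k : Fin d, ((m : ℤ) + (k : ℕ) ∈ B ↔ (M : ℤ) + (k : ℕ) ∈ B) := by
      intro k
      have := congrFun heq k
      simp only [decide_eq_decide] at this
      rcases le_or_gt (i : ℕ) (j : ℕ) with h | h
      · have hm' : m = (i : ℕ) := by omega
        have hM' : M = (j : ℕ) := by omega
        rw [hm', hM']; exact this
      · have hm' : m = (j : ℕ) := by omega
        have hM' : M = (i : ℕ) := by omega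
        rw [hm', hM']; exact this.symm
    set Q : ℤ → Prop := fun m' => ∀ j', m' ≤ j' → j' < m' + d → (j' ∈ B ↔ j' + t ∈ B) with hQdef
    have base : Q (m : ℤ) := by
      intro j' h1 h2
      have hk : (j' - m).toNat < d := by omega
      have := hwin ⟨(j' - m).toNat, hk⟩
      simp only at this
      have he1 : (m : ℤ) + ((j' - m).toNat : ℤ) = j' := by omega
      have he2 : (M : ℤ) + ((j' - m).toNat : ℤ) = j' + t := by omega
      rw [he1, he2] at this
      exact this
    have stepf : ∀ m' : ℤ, Q m' → Q (m' + 1) := by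
      intro m' hQ j' h1 h2
      by_cases hcase : j' < m' + d
      · exact hQ j' (by omega) hcase
      · have hx : j' = m' + d := by omega
        rw [key a0 ha0mem j', key a0 ha0mem (j' + t)]
        constructor
        · intro h b hb hbne ha
          obtain ⟨hl, hr⟩ := hbound _ ha
          have hmem : b - t ∈ B := (hQ (b - t) (by omega) (by omega)).mpr (by
            have : b - t + t = b := by ring
            rwa [this])
          refine h (b - t) hmem (by omega) ?_
          have : j' + a0 - (b - t) = j' + t + a0 - b := by ring
          rwa [this]
        · intro h b hb hbne ha
          obtain ⟨hl, hr⟩ := hbound _ ha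
          have hmem : b + t ∈ B := (hQ b (by omega) (by omega)).mp hb
          refine h (b + t) hmem (by omega) ?_
          have : j' + t + a0 - (b + t) = j' + a0 - b := by ring
          rwa [this]
    have stepb : ∀ m' : ℤ, Q m' → Q (m' - 1) := by
      intro m' hQ j' h1 h2
      by_cases hcase : m' ≤ j'
      · exact hQ j' hcase (by omega)
      · have hx : j' = m' - 1 := by omega
        rw [key a1 ha1mem j', key a1 ha1mem (j' + t)]
        constructor
        · intro h b hb hbne ha
          obtain ⟨hl, hr⟩ := hbound _ ha
          have hmem : b - t ∈ B := (hQ (b - t) (by omega) (by omega)).mpr (by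
            have : b - t + t = b := by ring
            rwa [this])
          refine h (b - t) hmem (by omega) ?_
          have : j' + a1 - (b - t) = j' + t + a1 - b := by ring
          rwa [this]
        · intro h b hb hbne ha
          obtain ⟨hl, hr⟩ := hbound _ ha
          have hmem : b + t ∈ B := (hQ b (by omega) (by omega)).mp hb
          refine h (b + t) hmem (by omega) ?_
          have : j' + t + a1 - (b + t) = j' + a1 - b := by ring
          rwa [this]
    have hQall : ∀ k : ℤ, Q ((m : ℤ) + k) := by
      intro k
      induction k using Int.induction_on with
      | zero => simpa using base
      | succ n ih =>
        have := stepf _ ih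
        have he : (m : ℤ) + n + 1 = (m : ℤ) + (n + 1) := by ring
        rwa [he] at this
      | pred n ih =>
        have := stepb _ ih
        have he : (m : ℤ) + (-n) - 1 = (m : ℤ) + (-n - 1) := by ring
        rwa [he] at this
    have hBt : ∀ x : ℤ, x ∈ B ↔ x + t ∈ B := by
      intro x
      have := hQall (x - m)
      have he : (m : ℤ) + (x - m) = x := by ring
      rw [he] at this
      exact this x le_rfl (by omega)
    refine ⟨t, ht0, ?_, ?_⟩
    · ext y
      simp only [Set.mem_image]
      constructor
      · rintro ⟨b, hb, rfl⟩
        exact (hBt b).mp hb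
      · intro hy
        exact ⟨y - t, (hBt (y - t)).mpr (by simpa using hy), by ring⟩
    · have : ((2 ^ d : ℕ) : ℤ) = 2 ^ d := by push_cast; ring
      omega
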